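/- Sophie Germain's criterion: if p is an odd prime such that 2p + 1 is also prime, then the first case of Fermat's Last Theorem holds for p: there are no integers x, y, z with xᵖ + yᵖ = zᵖ and p not dividing xyz, xyz ≠ 0. -/

import Mathlib

open Finset


private lemma sg_pm_one_pow (p : ℕ) [Fact (Nat.Prime (2 * p + 1))]
    (a : ZMod (2 * p + 1)) (ha : a ≠ 0) : a ^ p = 1 ∨ a ^ p = -1 := by
  have h := ZMod.pow_card_sub_one_eq_one ha
  have h2 : a ^ p * a ^ p = 1 := by
    rw [← pow_add]
    have hpp : p + p = 2 * p + 1 - 1 := by omega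
    rw [hpp]; exact h
  exact mul_self_eq_one_iff.mp h2

private lemma sg_eps_sum_ne (q : ℕ) [Fact (Nat.Prime q)] (hq7 : 7 ≤ q)
    (e1 e2 e3 : ZMod q) (h1 : e1 = 1 ∨ e1 = -1) (h2 : e2 = 1 ∨ e2 = -1)
    (h3 : e3 = 1 ∨ e3 = -1) : e1 + e2 + e3 ≠ 0 := by
  have h3ne : (3 : ZMod q) ≠ 0 := by
    intro h
    have h3' : ((3 : ℕ) : ZMod q) = 0 := by push_cast; exact h
    have := (ZMod.natCast_eq_zero_iff 3 q).mp h3'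
    have := Nat.le_of_dvd (by norm_num) this
    omega
  have h1ne : (1 : ZMod q) ≠ 0 := one_ne_zero
  rcases h1 with rfl | rfl <;> rcases h2 with rfl | rfl <;> rcases h3 with rfl | rfl <;>
    intro h <;>
    first
      | exact h3ne (by linear_combination h)
      | exact h3ne (by linear_combination -h)
      | exact h1ne (by linear_combination h)
      | exact h1ne (by linear_combination -h)

private lemma sg_phi_cast (p : ℕ) (hp1 : 1 ≤ p) (r : ℕ) (u v : ℤ)
    (h : ((u + v : ℤ) : ZMod r) = 0) :
    ((∑ i ∈ range p, u ^ i * (-v) ^ (p - 1 - i) : ℤ) : ZMod r)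
      = (p : ZMod r) * (u : ZMod r) ^ (p - 1) := by
  have hv : ((v : ℤ) : ZMod r) = -((u : ℤ) : ZMod r) := by
    push_cast at h; linear_combination h
  push_cast
  rw [hv]
  have : ∀ i ∈ range p, (u : ZMod r) ^ i * (-(-(u : ZMod r))) ^ (p - 1 - i)
      = (u : ZMod r) ^ (p - 1) := by
    intro i hi
    rw [neg_neg, ← pow_add]
    congr 1
    have := mem_range.mp hi
    omega
  rw [Finset.sum_congr rfl this, Finset.sum_const, card_range, nsmul_eq_mul]

private lemma sg_pair_pow (p : ℕ) (hp : Nat.Prime p) (hodd : Odd p)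
    (u v w : ℤ) (h : u ^ p + v ^ p + w ^ p = 0) (hco : IsCoprime u v)
    (hpw : ¬ (p : ℤ) ∣ w) :
    (∃ d : ℤ, u + v = d ^ p) ∧
      (∃ t : ℤ, (∑ i ∈ range p, u ^ i * (-v) ^ (p - 1 - i)) = t ^ p) := by
  set Φ : ℤ := ∑ i ∈ range p, u ^ i * (-v) ^ (p - 1 - i) with hΦ
  have hfac : (u + v) * Φ = (-w) ^ p := by
    have hgeo := geom_sum₂_mul u (-v) p
    rw [sub_neg_eq_add, hodd.neg_pow] at hgeo
    rw [hodd.neg_pow]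
    linear_combination hgeo + h
  have hco2 : IsCoprime (u + v) Φ := by
    rw [Int.isCoprime_iff_gcd_eq_one]
    by_contra hg
    obtain ⟨r, hrp, hrd⟩ := Nat.exists_prime_and_dvd hg
    haveI : Fact r.Prime := ⟨hrp⟩
    have hr1 : (r : ℤ) ∣ u + v :=
      dvd_trans (Int.natCast_dvd_natCast.mpr hrd) (Int.gcd_dvd_left _ _)
    have hr2 : (r : ℤ) ∣ Φ :=
      dvd_trans (Int.natCast_dvd_natCast.mpr hrd) (Int.gcd_dvd_right _ _)
    have h1 : ((u + v : ℤ) : ZMod r) = 0 := (ZMod.intCast_zmod_eq_zero_iff_dvd _ _).mpr hr1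
    have h2 : ((Φ : ℤ) : ZMod r) = 0 := (ZMod.intCast_zmod_eq_zero_iff_dvd _ _).mpr hr2
    rw [sg_phi_cast p hp.one_lt.le r u v h1] at h2
    rcases mul_eq_zero.mp h2 with hcase | hcase
    · -- r ∣ p, so r = p
      have hrdp : r ∣ p := by
        have : ((p : ℕ) : ZMod r) = 0 := hcase
        exact (ZMod.natCast_eq_zero_iff p r).mp this
      have hrep : r = p := (Nat.prime_dvd_prime_iff_eq hrp hp).mp hrdp
      have hr1' : (p : ℤ) ∣ u + v := hrep ▸ hr1
      have hdw : (p : ℤ) ∣ (-w) ^ p := hfac ▸ Dvd.dvd.mul_right hr1' Φ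
      have : (p : ℤ) ∣ -w := (Nat.prime_iff_prime_int.mp hp).dvd_of_dvd_pow hdw
      exact hpw ((dvd_neg.mp this))
    · -- (u : ZMod r) = 0
      have hp2 := hp.two_le
      have hu0 : ((u : ℤ) : ZMod r) = 0 :=
        pow_eq_zero_iff (by omega : p - 1 ≠ 0) |>.mp hcase
      have hru : (r : ℤ) ∣ u := (ZMod.intCast_zmod_eq_zero_iff_dvd _ _).mp hu0
      have hrv : (r : ℤ) ∣ v := (dvd_add_right hru).mp hr1
      have := hco.isUnit_of_dvd' hru hrv
      rw [Int.isUnit_iff] at this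
      have hr1' := hrp.one_lt
      rcases this with h' | h' <;> omega
  constructor
  · exact Int.eq_pow_of_mul_eq_pow_odd_left hco2 hodd hfac
  · exact Int.eq_pow_of_mul_eq_pow_odd_right hco2 hodd hfac

private lemma sg_key (p : ℕ) (hp : Nat.Prime p) (hodd : Odd p)
    (hq : Nat.Prime (2 * p + 1))
    (a b c : ℤ) (h : a ^ p + b ^ p + c ^ p = 0)
    (hab : IsCoprime a b) (hbc : IsCoprime b c) (hca : IsCoprime c a)
    (hpa : ¬ (p : ℤ) ∣ a) (hpb : ¬ (p : ℤ) ∣ b) (hpc : ¬ (p : ℤ) ∣ c)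
    (hqa : ((2 * p + 1 : ℕ) : ℤ) ∣ a) : False := by
  haveI : Fact (Nat.Prime (2 * p + 1)) := ⟨hq⟩
  have hp3 : 3 ≤ p := by
    have := hp.two_le
    rcases hodd with ⟨k, hk⟩; omega
  have hq7 : 7 ≤ 2 * p + 1 := by omega
  -- the three pairs
  obtain ⟨⟨A, hA⟩, ⟨t, ht⟩⟩ := sg_pair_pow p hp hodd b c a (by linarith) hbc hpa
  obtain ⟨⟨B, hB⟩, -⟩ := sg_pair_pow p hp hodd c a b (by linarith) hca hpb
  obtain ⟨⟨C, hC⟩, -⟩ := sg_pair_pow p hp hodd a b c (by linarith) hab hpc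
  -- work mod q
  have ha0 : ((a : ℤ) : ZMod (2 * p + 1)) = 0 :=
    (ZMod.intCast_zmod_eq_zero_iff_dvd _ _).mpr (by exact_mod_cast hqa)
  have hqunit : ∀ x : ℤ, ((x : ℤ) : ZMod (2 * p + 1)) = 0 → IsCoprime a x → False := by
    intro x hx hcop
    have hdx : ((2 * p + 1 : ℕ) : ℤ) ∣ x := by
      have := (ZMod.intCast_zmod_eq_zero_iff_dvd x (2 * p + 1)).mp hx
      exact_mod_cast this
    have := hcop.isUnit_of_dvd' hqa hdx
    rw [Int.isUnit_iff] at this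
    rcases this with h' | h' <;> omega
  have hb0 : ((b : ℤ) : ZMod (2 * p + 1)) ≠ 0 := fun hx => hqunit b hx hab
  have hc0 : ((c : ℤ) : ZMod (2 * p + 1)) ≠ 0 := fun hx => hqunit c hx hca.symm
  -- q ∣ A
  have hA0 : ((A : ℤ) : ZMod (2 * p + 1)) = 0 := by
    by_contra hAne
    have hBp : ((B : ℤ) : ZMod (2 * p + 1)) ^ p = (c : ZMod (2 * p + 1)) := by
      have : ((c + a : ℤ) : ZMod (2 * p + 1)) = ((B ^ p : ℤ) : ZMod (2 * p + 1)) := by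
        rw [hB]
      push_cast at this ⊢
      rw [← this, ha0, add_zero]
    have hCp : ((C : ℤ) : ZMod (2 * p + 1)) ^ p = (b : ZMod (2 * p + 1)) := by
      have : ((a + b : ℤ) : ZMod (2 * p + 1)) = ((C ^ p : ℤ) : ZMod (2 * p + 1)) := by
        rw [hC]
      push_cast at this ⊢
      rw [← this, ha0, zero_add]
    have hApbc : ((A : ℤ) : ZMod (2 * p + 1)) ^ p
        = (b : ZMod (2 * p + 1)) + (c : ZMod (2 * p + 1)) := by
      have : ((b + c : ℤ) : ZMod (2 * p + 1)) = ((A ^ p : ℤ) : ZMod (2 * p + 1)) := by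
        rw [hA]
      push_cast at this ⊢
      rw [← this]
    have hBne : ((B : ℤ) : ZMod (2 * p + 1)) ≠ 0 := by
      intro h'; apply hc0; rw [← hBp, h']; simp [hp.pos.ne']
    have hCne : ((C : ℤ) : ZMod (2 * p + 1)) ≠ 0 := by
      intro h'; apply hb0; rw [← hCp, h']; simp [hp.pos.ne']
    have e1 := sg_pm_one_pow p _ hBne
    have e2 := sg_pm_one_pow p _ hCne
    have e3 := sg_pm_one_pow p _ hAne
    have e3' : -((A : ℤ) : ZMod (2 * p + 1)) ^ p = 1 ∨
        -((A : ℤ) : ZMod (2 * p + 1)) ^ p = -1 := by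
      rcases e3 with h' | h' <;> rw [h'] <;> simp
    apply sg_eps_sum_ne (2 * p + 1) hq7 _ _ _ e1 e2 e3'
    rw [hBp, hCp, hApbc]
    ring
  -- q ∣ b + c
  have hbc0 : ((b + c : ℤ) : ZMod (2 * p + 1)) = 0 := by
    rw [hA]
    push_cast
    rw [hA0]
    simp [hp.pos.ne']
  -- Φ ≡ p b^(p-1)
  have hΦ := sg_phi_cast p hp.one_lt.le (2 * p + 1) b c hbc0
  rw [ht] at hΦ
  push_cast at hΦ
  -- hΦ : (t:K)^p = p * (b:K)^(p-1)
  have htne : ((t : ℤ) : ZMod (2 * p + 1)) ≠ 0 := by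
    intro h'
    rw [h'] at hΦ
    have h0 : (0 : ZMod (2 * p + 1)) = (p : ZMod (2 * p + 1)) * ((b:ℤ) : ZMod (2*p+1)) ^ (p-1) := by
      rw [← hΦ]; simp [hp.pos.ne']
    rcases mul_eq_zero.mp h0.symm with h'' | h''
    · have : (2 * p + 1) ∣ p := (ZMod.natCast_eq_zero_iff p (2*p+1)).mp h''
      have := Nat.le_of_dvd hp.pos this
      omega
    · exact hb0 (pow_eq_zero_iff (by omega : p - 1 ≠ 0) |>.mp h'')
  have hCp : ((C : ℤ) : ZMod (2 * p + 1)) ^ p = ((b:ℤ) : ZMod (2 * p + 1)) := by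
    have : ((a + b : ℤ) : ZMod (2 * p + 1)) = ((C ^ p : ℤ) : ZMod (2 * p + 1)) := by rw [hC]
    push_cast at this ⊢
    rw [← this, ha0, zero_add]
  have hCne : ((C : ℤ) : ZMod (2 * p + 1)) ≠ 0 := by
    intro h'; apply hb0; rw [← hCp, h']; simp [hp.pos.ne']
  -- abbreviations
  set K := ZMod (2 * p + 1)
  set P : K := (p : K) with hPdef
  set bb : K := ((b : ℤ) : K)
  set T : K := ((t : ℤ) : K) ^ p
  set X : K := bb ^ p
  -- heq : P * X = T * bb
  have heq : P * X = T * bb := by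
    have h1 : T * bb = P * bb ^ (p - 1) * bb := by rw [hΦ]
    have h2 : bb ^ (p - 1) * bb = X := by
      rw [← pow_succ]
      congr 1
      omega
    rw [h1, mul_assoc, h2]
  have hX : X * X = 1 := by
    rcases sg_pm_one_pow p bb hb0 with h' | h' <;> rw [show X = bb ^ p from rfl, h'] <;> ring
  have hT : T * T = 1 := by
    rcases sg_pm_one_pow p _ htne with h' | h' <;> rw [show T = _ ^ p from rfl, h'] <;> ring
  have hbb : bb * bb = 1 := by
    rcases sg_pm_one_pow p _ hCne with h' | h' <;> rw [← hCp, h'] <;> ring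
  have hPP : P * P = 1 := by
    linear_combination (P * X + T * bb) * heq - P * P * hX + T * T * hbb + hT
  rcases mul_self_eq_one_iff.mp hPP with hP1 | hP1
  · rw [hPdef] at hP1
    have : (((p : ℤ) - 1 : ℤ) : K) = 0 := by push_cast; rw [hP1]; ring
    have := (ZMod.intCast_zmod_eq_zero_iff_dvd _ _).mp this
    have hle := Int.le_of_dvd (by omega : (0:ℤ) < (p:ℤ) - 1) this
    omega
  · rw [hPdef] at hP1
    have : (((p : ℤ) + 1 : ℤ) : K) = 0 := by push_cast; rw [hP1]; ring
    have := (ZMod.intCast_zmod_eq_zero_iff_dvd _ _).mp this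
    have hle := Int.le_of_dvd (by omega : (0:ℤ) < (p:ℤ) + 1) this
    omega

private lemma sg_cop (p : ℕ) (hp1 : 1 ≤ p) (a b c : ℤ) (h : a ^ p + b ^ p + c ^ p = 0)
    (hnc : ∀ r : ℕ, r.Prime → (r : ℤ) ∣ a → (r : ℤ) ∣ b → (r : ℤ) ∣ c → False) :
    IsCoprime a b := by
  rw [Int.isCoprime_iff_gcd_eq_one]
  by_contra hg
  obtain ⟨r, hrp, hrd⟩ := Nat.exists_prime_and_dvd hg
  have hra : (r : ℤ) ∣ a := (Int.natCast_dvd_natCast.mpr hrd).trans (Int.gcd_dvd_left _ _)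
  have hrb : (r : ℤ) ∣ b := (Int.natCast_dvd_natCast.mpr hrd).trans (Int.gcd_dvd_right _ _)
  have hrc : (r : ℤ) ∣ c := by
    have hcp : (r : ℤ) ∣ c ^ p := by
      have hcc : c ^ p = -(a ^ p) - b ^ p := by linarith
      rw [hcc]
      exact dvd_sub (dvd_neg.mpr (dvd_pow hra (by omega))) (dvd_pow hrb (by omega))
    exact (Nat.prime_iff_prime_int.mp hrp).dvd_of_dvd_pow hcp
  exact hnc r hrp hra hrb hrc

theorem sophie_germain (p : ℕ) (hp : Nat.Prime p) (hodd : Odd p)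
    (hsg : Nat.Prime (2 * p + 1)) :
    ¬ ∃ x y z : ℤ, x * y * z ≠ 0 ∧ ¬ (p : ℤ) ∣ x * y * z ∧ x ^ p + y ^ p = z ^ p := by
  rintro ⟨x, y, z, hxyz, hpxyz, heq⟩
  haveI : Fact (Nat.Prime (2 * p + 1)) := ⟨hsg⟩
  have hx : x ≠ 0 := fun h => hxyz (by rw [h]; ring)
  have h0 : x ^ p + y ^ p + (-z) ^ p = 0 := by rw [hodd.neg_pow]; linarith
  set g : ℕ := Int.gcd (Int.gcd x y : ℤ) (-z) with hg
  have hgx : (g : ℤ) ∣ x := (Int.gcd_dvd_left _ _).trans (Int.gcd_dvd_left _ _)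
  have hgy : (g : ℤ) ∣ y := (Int.gcd_dvd_left _ _).trans (Int.gcd_dvd_right _ _)
  have hgz : (g : ℤ) ∣ -z := Int.gcd_dvd_right _ _
  have hgne : (g : ℤ) ≠ 0 := fun h => hx (zero_dvd_iff.mp (h ▸ hgx))
  have hg0 : g ≠ 0 := fun h => hgne (by exact_mod_cast congrArg (Nat.cast : ℕ → ℤ) h)
  obtain ⟨a, ha⟩ := hgx
  obtain ⟨b, hb⟩ := hgy
  obtain ⟨c, hc⟩ := hgz
  rw [ha, hb, hc] at h0
  rw [mul_pow, mul_pow, mul_pow] at h0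
  have hsum : a ^ p + b ^ p + c ^ p = 0 := by
    have h1 : (g : ℤ) ^ p * (a ^ p + b ^ p + c ^ p) = 0 := by linear_combination h0
    rcases mul_eq_zero.mp h1 with h' | h'
    · exact absurd h' (pow_ne_zero _ hgne)
    · exact h'
  -- triple gcd is 1
  have hg1 : Int.gcd (Int.gcd a b : ℤ) c = 1 := by
    have h2 : Int.gcd x y = g * Int.gcd a b := by
      rw [ha, hb, Int.gcd_mul_left]; simp
    have h3 := hg
    rw [h2, hc, Nat.cast_mul, Int.gcd_mul_left] at h3
    simp only [Int.natAbs_natCast] at h3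
    have h4 : g * Int.gcd (Int.gcd a b : ℤ) c = g * 1 := by rw [mul_one]; exact h3.symm
    exact Nat.eq_of_mul_eq_mul_left (Nat.pos_of_ne_zero hg0) h4
  have hnc : ∀ r : ℕ, r.Prime → (r : ℤ) ∣ a → (r : ℤ) ∣ b → (r : ℤ) ∣ c → False := by
    intro r hrp hra hrb hrc
    have h1 : (r : ℤ) ∣ (Int.gcd a b : ℤ) := Int.dvd_coe_gcd hra hrb
    have h2 : (r : ℤ) ∣ (Int.gcd (Int.gcd a b : ℤ) c : ℤ) := Int.dvd_coe_gcd h1 hrc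
    rw [hg1] at h2
    have hr1 : r ∣ 1 := by exact_mod_cast h2
    have := Nat.le_of_dvd one_pos hr1
    have := hrp.one_lt
    omega
  have hab : IsCoprime a b := sg_cop p hp.one_lt.le a b c hsum hnc
  have hbc : IsCoprime b c :=
    sg_cop p hp.one_lt.le b c a (by linarith) fun r h h1 h2 h3 => hnc r h h3 h1 h2
  have hca : IsCoprime c a :=
    sg_cop p hp.one_lt.le c a b (by linarith) fun r h h1 h2 h3 => hnc r h h2 h3 h1
  -- p does not divide a, b, c
  have hax : a ∣ x := ⟨g, by rw [ha]; ring⟩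
  have hby : b ∣ y := ⟨g, by rw [hb]; ring⟩
  have hcz : c ∣ z := by
    refine ⟨-(g : ℤ), ?_⟩
    have : z = -(-z) := by ring
    rw [this, hc]; ring
  have hpa : ¬ (p : ℤ) ∣ a := fun hd =>
    hpxyz (((hd.trans hax).mul_right y).mul_right z)
  have hpb : ¬ (p : ℤ) ∣ b := fun hd =>
    hpxyz (Dvd.dvd.mul_right (Dvd.dvd.mul_left (hd.trans hby) x) z)
  have hpc : ¬ (p : ℤ) ∣ c := fun hd =>
    hpxyz (Dvd.dvd.mul_left (hd.trans hcz) (x * y))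
  -- q divides one of a, b, c
  by_cases hqa : ((a : ℤ) : ZMod (2 * p + 1)) = 0
  · exact sg_key p hp hodd hsg a b c hsum hab hbc hca hpa hpb hpc
      (by exact_mod_cast (ZMod.intCast_zmod_eq_zero_iff_dvd _ _).mp hqa)
  by_cases hqb : ((b : ℤ) : ZMod (2 * p + 1)) = 0
  · exact sg_key p hp hodd hsg b c a (by linarith) hbc hca hab hpb hpc hpa
      (by exact_mod_cast (ZMod.intCast_zmod_eq_zero_iff_dvd _ _).mp hqb)
  by_cases hqc : ((c : ℤ) : ZMod (2 * p + 1)) = 0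
  · exact sg_key p hp hodd hsg c a b (by linarith) hca hab hbc hpc hpa hpb
      (by exact_mod_cast (ZMod.intCast_zmod_eq_zero_iff_dvd _ _).mp hqc)
  -- otherwise contradiction mod q
  have hq7 : 7 ≤ 2 * p + 1 := by
    have := hp.two_le
    rcases hodd with ⟨k, hk⟩; omega
  have e1 := sg_pm_one_pow p _ hqa
  have e2 := sg_pm_one_pow p _ hqb
  have e3 := sg_pm_one_pow p _ hqc
  apply sg_eps_sum_ne (2 * p + 1) hq7 _ _ _ e1 e2 e3
  have : ((a ^ p + b ^ p + c ^ p : ℤ) : ZMod (2 * p + 1)) = 0 := by rw [hsum]; simp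
  push_cast at this
  exact this
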